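/- (Theorem S3) Let M = {(z,t): the sampling vector z and assignment vector t are attainable under the SRSE design and satisfy M_S≤a_S and M_T≤a_T}, and assume the two-stage design is well defined (for every attainable sampling z with M_S≤a_S there is at least one attainable assignment t with M_T≤a_T). Then the total variation distance between the distributions of (Z, T_S) under the single-stage design (uniform over M) and the two-stage design (Z uniform over attainable samplings with M_S≤a_S, then T_S uniform over attainable assignments with M_T≤a_T given Z) satisfies d_TV ≤ 1(M=∅) + 1(M≠∅) · E| P(M_T≤a_T | Z) − P(M_T≤a_T | M_S≤a_S) | / P(M_T≤a_T, M_S≤a_S), where the expectation and probabilities on the right-hand side are computed under the unconditional SRSE design. -/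

import Mathlib

open MeasureTheory ProbabilityTheory Filter Matrix
open scoped ENNReal NNReal

noncomputable section

namespace SurveyExperiments

/-- The uniform probability measure on a finite set of outcomes. -/
def unif {α : Type*} [MeasurableSpace α] (s : Finset α) : Measure α :=
  (s.card : ℝ≥0∞)⁻¹ • ∑ a ∈ s, MeasureTheory.Measure.dirac a

/-- The covariance of two real-valued random variables. -/
def covRV {Ω : Type*} [MeasurableSpace Ω] (μ : Measure Ω) (f g : Ω → ℝ) : ℝ :=
  ∫ ω, (f ω - ∫ x, f x ∂μ) * (g ω - ∫ x, g x ∂μ) ∂μ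

/-- The total variation distance between two measures. -/
def dTV {α : Type*} [MeasurableSpace α] (P Q : Measure α) : ℝ :=
  ⨆ A : Set α, |(P A).toReal - (Q A).toReal|

/-- The standard Gaussian measure on `ℝ^J`. -/
def stdGaussianPi (J : ℕ) : Measure (Fin J → ℝ) := Measure.pi fun _ => gaussianReal 0 1

/-- The law `L_{J,a}` of the first coordinate of a standard Gaussian vector in `ℝ^J`
conditioned on the event that its squared norm is at most `a`. -/
def truncGaussian (J : ℕ) [NeZero J] (a : ℝ) : Measure ℝ :=
  Measure.map (fun x => x 0)
    (ProbabilityTheory.cond (stdGaussianPi J) {x | ∑ i, (x i) ^ 2 ≤ a})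

/-- `ν_{J,a}`, the variance of the truncated Gaussian `L_{J,a}`. -/
def nu (J : ℕ) [NeZero J] (a : ℝ) : ℝ := variance id (truncGaussian J a)

/-- The law of `√v (√(1-rW-rX) ε + √rW L_{J1,aS} + √rX L_{J2,aT})` with independent
`ε ~ N(0,1)`, `L_{J1,aS}`, `L_{J2,aT}`. -/
def rrLimitLaw (v rW rX : ℝ) (J1 J2 : ℕ) [NeZero J1] [NeZero J2] (aS aT : ℝ) : Measure ℝ :=
  Measure.map
    (fun p : ℝ × ℝ × ℝ =>
      Real.sqrt v * (Real.sqrt (1 - rW - rX) * p.1 + Real.sqrt rW * p.2.1 + Real.sqrt rX * p.2.2))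
    ((gaussianReal 0 1).prod ((truncGaussian J1 aS).prod (truncGaussian J2 aT)))

/-- The `p`-th quantile of a measure on `ℝ`. -/
def quantile (μ : Measure ℝ) (p : ℝ) : ℝ := sInf {x : ℝ | ENNReal.ofReal p ≤ μ (Set.Iic x)}

/-- The data of a stratified (randomized survey) experiment: a population of `N` units
partitioned into `K` strata by `st`, with `nk k` units sampled and `nk1 k` sampled units
treated in stratum `k`. -/
structure SRSE where
  K : ℕ
  N : ℕ
  st : Fin N → Fin K
  nk : Fin K → ℕ
  nk1 : Fin K → ℕ

namespace SRSE

variable (E : SRSE)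

def stratum (k : Fin E.K) : Finset (Fin E.N) := Finset.univ.filter fun i => E.st i = k
def Nk (k : Fin E.K) : ℕ := (E.stratum k).card
def nk0 (k : Fin E.K) : ℕ := E.nk k - E.nk1 k
def n : ℕ := ∑ k, E.nk k
def Pi (k : Fin E.K) : ℝ := (E.Nk k : ℝ) / (E.N : ℝ)
def pik (k : Fin E.K) : ℝ := (E.nk k : ℝ) / (E.n : ℝ)
def fk (k : Fin E.K) : ℝ := (E.nk k : ℝ) / (E.Nk k : ℝ)
def f : ℝ := (E.n : ℝ) / (E.N : ℝ)
def e1 (k : Fin E.K) : ℝ := (E.nk1 k : ℝ) / (E.nk k : ℝ)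
def e0 (k : Fin E.K) : ℝ := (E.nk0 k : ℝ) / (E.nk k : ℝ)

/-- Sample space: a pair of sampling indicators and treatment indicators. -/
abbrev Omega := (Fin E.N → Bool) × (Fin E.N → Bool)

/-- The attainable pairs of indicators: `nk k` sampled and `nk1 k` treated units in each
stratum `k`, with treated units sampled. -/
def valid : Finset E.Omega :=
  Finset.univ.filter fun ω =>
    (∀ k, ((E.stratum k).filter fun i => ω.1 i = true).card = E.nk k) ∧
    (∀ k, ((E.stratum k).filter fun i => ω.1 i = true ∧ ω.2 i = true).card = E.nk1 k) ∧
    (∀ i, ω.2 i = true → ω.1 i = true)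

/-- The stratified randomized survey experiment (SRSE) design: stratified random sampling
without replacement followed by stratified randomization, i.e. the uniform distribution over
all attainable pairs of indicator vectors. -/
def P : Measure E.Omega := unif E.valid

def Z (ω : E.Omega) (i : Fin E.N) : ℝ := if ω.1 i then 1 else 0
def T (ω : E.Omega) (i : Fin E.N) : ℝ := if ω.2 i then 1 else 0

def meanK (a : Fin E.N → ℝ) (k : Fin E.K) : ℝ := (∑ i ∈ E.stratum k, a i) / (E.Nk k : ℝ)
def covK (a b : Fin E.N → ℝ) (k : Fin E.K) : ℝ :=
  (∑ i ∈ E.stratum k, (a i - E.meanK a k) * (b i - E.meanK b k)) / ((E.Nk k : ℝ) - 1)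
def meanAll (a : Fin E.N → ℝ) : ℝ := (∑ i, a i) / (E.N : ℝ)
def varAll (a : Fin E.N → ℝ) : ℝ := (∑ i, (a i - E.meanAll a) ^ 2) / ((E.N : ℝ) - 1)

def mean1 (a : Fin E.N → ℝ) (k : Fin E.K) (ω : E.Omega) : ℝ :=
  (∑ i ∈ E.stratum k, E.Z ω i * E.T ω i * a i) / (E.nk1 k : ℝ)
def mean0 (a : Fin E.N → ℝ) (k : Fin E.K) (ω : E.Omega) : ℝ :=
  (∑ i ∈ E.stratum k, E.Z ω i * (1 - E.T ω i) * a i) / (E.nk0 k : ℝ)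
def meanS (a : Fin E.N → ℝ) (k : Fin E.K) (ω : E.Omega) : ℝ :=
  (∑ i ∈ E.stratum k, E.Z ω i * a i) / (E.nk k : ℝ)

/-- The stratified difference-in-means estimator. -/
def hatTau (Y1 Y0 : Fin E.N → ℝ) (ω : E.Omega) : ℝ :=
  ∑ k, E.Pi k * (E.mean1 Y1 k ω - E.mean0 Y0 k ω)
/-- The finite-population average treatment effect. -/
def tau (Y1 Y0 : Fin E.N → ℝ) : ℝ := ∑ k, E.Pi k * (E.meanK Y1 k - E.meanK Y0 k)
/-- The treated/control covariate-mean-difference `τ̂_X`. -/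
def hatTauX {J : ℕ} (X : Fin E.N → Fin J → ℝ) (ω : E.Omega) : Fin J → ℝ := fun j =>
  ∑ k, E.Pi k * (E.mean1 (fun i => X i j) k ω - E.mean0 (fun i => X i j) k ω)
/-- The sampled/population covariate-mean-difference `δ̂_W`. -/
def hatDeltaW {J : ℕ} (W : Fin E.N → Fin J → ℝ) (ω : E.Omega) : Fin J → ℝ := fun j =>
  ∑ k, E.Pi k * (E.meanS (fun i => W i j) k ω - E.meanK (fun i => W i j) k)

def sCov1 (a b : Fin E.N → ℝ) (k : Fin E.K) (ω : E.Omega) : ℝ :=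
  (∑ i ∈ E.stratum k, E.Z ω i * E.T ω i * (a i - E.mean1 a k ω) * (b i - E.mean1 b k ω)) /
    ((E.nk1 k : ℝ) - 1)
def sCov0 (a b : Fin E.N → ℝ) (k : Fin E.K) (ω : E.Omega) : ℝ :=
  (∑ i ∈ E.stratum k, E.Z ω i * (1 - E.T ω i) * (a i - E.mean0 a k ω) * (b i - E.mean0 b k ω)) /
    ((E.nk0 k : ℝ) - 1)
def sCovS (a b : Fin E.N → ℝ) (k : Fin E.K) (ω : E.Omega) : ℝ :=
  (∑ i ∈ E.stratum k, E.Z ω i * (a i - E.meanS a k ω) * (b i - E.meanS b k ω)) /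
    ((E.nk k : ℝ) - 1)

/-- The `(τ,τ)` entry of the covariance matrix `V`. -/
def Vtt (Y1 Y0 : Fin E.N → ℝ) : ℝ :=
  ∑ k, (E.Pi k) ^ 2 / E.pik k *
    (E.covK Y1 Y1 k / E.e1 k + E.covK Y0 Y0 k / E.e0 k -
      E.fk k * E.covK (fun i => Y1 i - Y0 i) (fun i => Y1 i - Y0 i) k)
/-- The `(τ,X)` block of `V`. -/
def VtX {J : ℕ} (Y1 Y0 : Fin E.N → ℝ) (X : Fin E.N → Fin J → ℝ) : Fin J → ℝ := fun j =>
  ∑ k, (E.Pi k) ^ 2 / E.pik k *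
    (E.covK (fun i => X i j) Y1 k / E.e1 k + E.covK (fun i => X i j) Y0 k / E.e0 k)
/-- The `(τ,W)` block of `V`. -/
def VtW {J : ℕ} (Y1 Y0 : Fin E.N → ℝ) (W : Fin E.N → Fin J → ℝ) : Fin J → ℝ := fun j =>
  ∑ k, (E.Pi k) ^ 2 / E.pik k *
    ((1 - E.fk k) * E.covK (fun i => W i j) (fun i => Y1 i - Y0 i) k)
/-- The `(X,X)` block of `V`. -/
def VXX {J : ℕ} (X : Fin E.N → Fin J → ℝ) : Matrix (Fin J) (Fin J) ℝ :=
  Matrix.of fun j j' =>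
    ∑ k, (E.Pi k) ^ 2 / E.pik k *
      (E.covK (fun i => X i j) (fun i => X i j') k / (E.e1 k * E.e0 k))
/-- The `(W,W)` block of `V`. -/
def VWW {J : ℕ} (W : Fin E.N → Fin J → ℝ) : Matrix (Fin J) (Fin J) ℝ :=
  Matrix.of fun j j' =>
    ∑ k, (E.Pi k) ^ 2 / E.pik k *
      ((1 - E.fk k) * E.covK (fun i => W i j) (fun i => W i j') k)

/-- The covariance matrix of `δ̂_W` under stratified random sampling. -/
def covWSampling {J : ℕ} (W : Fin E.N → Fin J → ℝ) : Matrix (Fin J) (Fin J) ℝ :=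
  Matrix.of fun j j' =>
    ∑ k, (E.Pi k) ^ 2 * ((E.nk k : ℝ)⁻¹ - (E.Nk k : ℝ)⁻¹) *
      E.covK (fun i => W i j) (fun i => W i j') k
/-- The Mahalanobis sampling-balance criterion `M_S`. -/
def MS {J : ℕ} (W : Fin E.N → Fin J → ℝ) (ω : E.Omega) : ℝ :=
  E.hatDeltaW W ω ⬝ᵥ ((E.covWSampling W)⁻¹ *ᵥ E.hatDeltaW W ω)
/-- The conditional covariance matrix of `τ̂_X` given the sample. -/
def covXAssign {J : ℕ} (X : Fin E.N → Fin J → ℝ) (ω : E.Omega) : Matrix (Fin J) (Fin J) ℝ :=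
  Matrix.of fun j j' =>
    ∑ k, (E.Pi k) ^ 2 * ((E.nk k : ℝ) / ((E.nk1 k : ℝ) * (E.nk0 k : ℝ))) *
      E.sCovS (fun i => X i j) (fun i => X i j') k ω
/-- The Mahalanobis assignment-balance criterion `M_T`. -/
def MT {J : ℕ} (X : Fin E.N → Fin J → ℝ) (ω : E.Omega) : ℝ :=
  E.hatTauX X ω ⬝ᵥ ((E.covXAssign X ω)⁻¹ *ᵥ E.hatTauX X ω)
/-- The acceptance event `{M_S ≤ a_S, M_T ≤ a_T}`. -/
def accept {J1 J2 : ℕ} (W : Fin E.N → Fin J1 → ℝ) (X : Fin E.N → Fin J2 → ℝ) (aS aT : ℝ) :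
    Set E.Omega := {ω | E.MS W ω ≤ aS ∧ E.MT X ω ≤ aT}

/-- The SRSRR design: the SRSE design conditioned on acceptance of both balance criteria. -/
def Prr {J1 J2 : ℕ} (W : Fin E.N → Fin J1 → ℝ) (X : Fin E.N → Fin J2 → ℝ) (aS aT : ℝ) :
    Measure E.Omega := ProbabilityTheory.cond E.P (E.accept W X aS aT)

/-- The conservative variance estimator `V̂_ττ`. -/
def hatVtt (Y1 Y0 : Fin E.N → ℝ) (ω : E.Omega) : ℝ :=
  ∑ k, (E.Pi k) ^ 2 / E.pik k * (E.sCov1 Y1 Y1 k ω / E.e1 k + E.sCov0 Y0 Y0 k ω / E.e0 k)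
/-- The estimator `V̂_τX`. -/
def hatVtX {J : ℕ} (Y1 Y0 : Fin E.N → ℝ) (X : Fin E.N → Fin J → ℝ) (ω : E.Omega) : Fin J → ℝ :=
  fun j => ∑ k, (E.Pi k) ^ 2 / E.pik k *
    (E.sCov1 (fun i => X i j) Y1 k ω / E.e1 k + E.sCov0 (fun i => X i j) Y0 k ω / E.e0 k)
/-- The estimator `V̂_τW`. -/
def hatVtW {J : ℕ} (Y1 Y0 : Fin E.N → ℝ) (W : Fin E.N → Fin J → ℝ) (ω : E.Omega) : Fin J → ℝ :=
  fun j => ∑ k, (E.Pi k) ^ 2 / E.pik k *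
    ((1 - E.fk k) * (E.sCov1 (fun i => W i j) Y1 k ω - E.sCov0 (fun i => W i j) Y0 k ω))
/-- The estimator `V̂_XX`. -/
def hatVXX {J : ℕ} (X : Fin E.N → Fin J → ℝ) (ω : E.Omega) : Matrix (Fin J) (Fin J) ℝ :=
  Matrix.of fun j j' => ∑ k, (E.Pi k) ^ 2 / E.pik k *
    (E.sCovS (fun i => X i j) (fun i => X i j') k ω / (E.e1 k * E.e0 k))
/-- The plug-in estimator `R̂²_W` (also used for `R̂²_E` with analysis-stage covariates). -/
def hatRW2 {J : ℕ} (Y1 Y0 : Fin E.N → ℝ) (W : Fin E.N → Fin J → ℝ) (ω : E.Omega) : ℝ :=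
  (E.hatVtW Y1 Y0 W ω ⬝ᵥ ((E.VWW W)⁻¹ *ᵥ E.hatVtW Y1 Y0 W ω)) / E.hatVtt Y1 Y0 ω
/-- The plug-in estimator `R̂²_X` (also used for `R̂²_C` with analysis-stage covariates). -/
def hatRX2 {J : ℕ} (Y1 Y0 : Fin E.N → ℝ) (X : Fin E.N → Fin J → ℝ) (ω : E.Omega) : ℝ :=
  (E.hatVtX Y1 Y0 X ω ⬝ᵥ ((E.hatVXX X ω)⁻¹ *ᵥ E.hatVtX Y1 Y0 X ω)) / E.hatVtt Y1 Y0 ω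

/-- The estimated regression-adjustment coefficient `β̂`. -/
def hatBeta {J : ℕ} (Y1 Y0 : Fin E.N → ℝ) (C : Fin E.N → Fin J → ℝ) (ω : E.Omega) : Fin J → ℝ :=
  (E.hatVXX C ω)⁻¹ *ᵥ E.hatVtX Y1 Y0 C ω
/-- The estimated regression-adjustment coefficient `γ̂`. -/
def hatGamma {J : ℕ} (Y1 Y0 : Fin E.N → ℝ) (Ecov : Fin E.N → Fin J → ℝ) (ω : E.Omega) :
    Fin J → ℝ :=
  (E.VWW Ecov)⁻¹ *ᵥ E.hatVtW Y1 Y0 Ecov ω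
/-- The regression-adjusted estimator `τ̂_adj = τ̂ - β̂ᵀτ̂_C - γ̂ᵀδ̂_E`. -/
def hatTauAdj {J3 J4 : ℕ} (Y1 Y0 : Fin E.N → ℝ) (C : Fin E.N → Fin J4 → ℝ)
    (Ecov : Fin E.N → Fin J3 → ℝ) (ω : E.Omega) : ℝ :=
  E.hatTau Y1 Y0 ω - E.hatBeta Y1 Y0 C ω ⬝ᵥ E.hatTauX C ω -
    E.hatGamma Y1 Y0 Ecov ω ⬝ᵥ E.hatDeltaW Ecov ω

/-- The vector stratified difference-in-means estimator `τ̂_R`. -/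
def hatTauVec {d : ℕ} (R1 R0 : Fin E.N → Fin d → ℝ) (ω : E.Omega) : Fin d → ℝ := fun j =>
  ∑ k, E.Pi k * (E.mean1 (fun i => R1 i j) k ω - E.mean0 (fun i => R0 i j) k ω)
/-- The vector estimand `τ_R`. -/
def tauVec {d : ℕ} (R1 R0 : Fin E.N → Fin d → ℝ) : Fin d → ℝ := fun j =>
  ∑ k, E.Pi k * (E.meanK (fun i => R1 i j) k - E.meanK (fun i => R0 i j) k)
/-- The covariance matrix `V_R` of `√n (τ̂_R - τ_R)`. -/
def VRmat {d : ℕ} (R1 R0 : Fin E.N → Fin d → ℝ) : Matrix (Fin d) (Fin d) ℝ :=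
  Matrix.of fun j j' =>
    ∑ k, (E.Pi k) ^ 2 / E.pik k *
      (E.covK (fun i => R1 i j) (fun i => R1 i j') k / E.e1 k +
        E.covK (fun i => R0 i j) (fun i => R0 i j') k / E.e0 k -
        E.fk k * E.covK (fun i => R1 i j - R0 i j) (fun i => R1 i j' - R0 i j') k)

/-- The attainable sampling vectors. -/
def validZ : Finset (Fin E.N → Bool) :=
  Finset.univ.filter fun z => ∀ k, ((E.stratum k).filter fun i => z i = true).card = E.nk k
/-- Stratified random sampling without replacement: the uniform distribution over attainable
sampling vectors. -/
def Psamp : Measure (Fin E.N → Bool) := unif E.validZ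
/-- `δ̂_W` as a function of the sampling vector alone. -/
def deltaWz {J : ℕ} (W : Fin E.N → Fin J → ℝ) (z : Fin E.N → Bool) : Fin J → ℝ := fun j =>
  ∑ k, E.Pi k *
    ((∑ i ∈ E.stratum k, (if z i then (1 : ℝ) else 0) * W i j) / (E.nk k : ℝ) -
      E.meanK (fun i => W i j) k)

/-- The attainable treatment-assignment vectors given the sampling vector `z`. -/
def validT (z : Fin E.N → Bool) : Finset (Fin E.N → Bool) :=
  Finset.univ.filter fun t =>
    (∀ k, ((E.stratum k).filter fun i => z i = true ∧ t i = true).card = E.nk1 k) ∧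
    (∀ i, t i = true → z i = true)
/-- Stratified randomization of the sampled units, conditionally on the sampling vector `z`. -/
def Pgiven (z : Fin E.N → Bool) : Measure E.Omega :=
  unif ((E.validT z).image fun t => (z, t))

/-- `M_S` as a function of the sampling vector alone. -/
def MSz {J : ℕ} (W : Fin E.N → Fin J → ℝ) (z : Fin E.N → Bool) : ℝ := E.MS W (z, z)
/-- The acceptable sampling vectors. -/
def acceptZ {J : ℕ} (W : Fin E.N → Fin J → ℝ) (aS : ℝ) : Finset (Fin E.N → Bool) :=
  E.validZ.filter fun z => E.MSz W z ≤ aS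
/-- The acceptable assignment vectors given a sampling vector `z`. -/
def acceptT {J : ℕ} (X : Fin E.N → Fin J → ℝ) (aT : ℝ) (z : Fin E.N → Bool) :
    Finset (Fin E.N → Bool) := (E.validT z).filter fun t => E.MT X (z, t) ≤ aT
/-- The set `M` of jointly acceptable pairs. -/
def acceptedPairs {J1 J2 : ℕ} (W : Fin E.N → Fin J1 → ℝ) (X : Fin E.N → Fin J2 → ℝ)
    (aS aT : ℝ) : Finset E.Omega :=
  E.valid.filter fun ω => E.MS W ω ≤ aS ∧ E.MT X ω ≤ aT
/-- The single-stage rejective design: uniform over jointly acceptable pairs. -/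
def singleStage {J1 J2 : ℕ} (W : Fin E.N → Fin J1 → ℝ) (X : Fin E.N → Fin J2 → ℝ)
    (aS aT : ℝ) : Measure E.Omega := unif (E.acceptedPairs W X aS aT)
/-- The two-stage rejective design: first a uniform acceptable sampling, then a uniform
acceptable assignment given the sampling. -/
def twoStage {J1 J2 : ℕ} (W : Fin E.N → Fin J1 → ℝ) (X : Fin E.N → Fin J2 → ℝ) (aS aT : ℝ) :
    Measure E.Omega :=
  ((E.acceptZ W aS).card : ℝ≥0∞)⁻¹ • ∑ z ∈ E.acceptZ W aS,
    (((E.acceptT X aT z).card : ℝ≥0∞)⁻¹ • ∑ t ∈ E.acceptT X aT z, Measure.dirac (z, t))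
/-- The conditional acceptance probability `P(M_T ≤ a_T ∣ Z = z)`. -/
def condAcceptProb {J : ℕ} (X : Fin E.N → Fin J → ℝ) (aT : ℝ) (z : Fin E.N → Bool) : ℝ :=
  ((E.acceptT X aT z).card : ℝ) / ((E.validT z).card : ℝ)

end SRSE

section Aux

variable {α : Type*} [MeasurableSpace α] [MeasurableSingletonClass α] [Countable α]

private lemma measAll (A : Set α) : MeasurableSet A := (Set.to_countable A).measurableSet

private lemma unif_apply (s : Finset α) (A : Set α) [DecidablePred (· ∈ A)] :
    unif s A = (s.card : ℝ≥0∞)⁻¹ * (((s.filter (· ∈ A)).card : ℕ) : ℝ≥0∞) := by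
  rw [unif, Measure.smul_apply, Measure.finset_sum_apply, smul_eq_mul]
  congr 1
  rw [Finset.card_filter, Nat.cast_sum]
  refine Finset.sum_congr rfl fun a _ => ?_
  rw [MeasureTheory.Measure.dirac_apply' _ (measAll A)]
  by_cases h : a ∈ A <;> simp [h]

private lemma integral_unif [Finite α] (s : Finset α) (f : α → ℝ) :
    ∫ a, f a ∂(unif s) = (s.card : ℝ)⁻¹ * ∑ a ∈ s, f a := by
  rw [unif, MeasureTheory.integral_smul_measure,
    MeasureTheory.integral_finset_sum_measure (fun i _ => MeasureTheory.Integrable.of_finite)]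
  simp [MeasureTheory.integral_dirac, ENNReal.toReal_inv, smul_eq_mul]

end Aux

private lemma abs_sum_le_half {ι : Type*} (s : Finset ι) (c e : ι → ℝ)
    (hc0 : ∀ i ∈ s, 0 ≤ c i) (hc1 : ∀ i ∈ s, c i ≤ 1) (hsum : ∑ i ∈ s, e i = 0) :
    |∑ i ∈ s, c i * e i| ≤ (∑ i ∈ s, |e i|) / 2 := by
  have key : ∀ d : ι → ℝ, (∀ i ∈ s, 0 ≤ d i) → (∀ i ∈ s, d i ≤ 1) →
      ∑ i ∈ s, d i * e i ≤ (∑ i ∈ s, |e i|) / 2 := by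
    intro d hd0 hd1
    have hpt : ∀ i ∈ s, d i * e i ≤ (e i + |e i|) / 2 := by
      intro i hi
      rcases le_or_gt 0 (e i) with h | h
      · have habs := abs_of_nonneg h
        nlinarith [hd0 i hi, hd1 i hi]
      · have habs := abs_of_neg h
        nlinarith [hd0 i hi, hd1 i hi]
    calc ∑ i ∈ s, d i * e i ≤ ∑ i ∈ s, (e i + |e i|) / 2 := Finset.sum_le_sum hpt
      _ = (∑ i ∈ s, |e i|) / 2 := by
          rw [← Finset.sum_div, Finset.sum_add_distrib, hsum, zero_add]
  rw [abs_le]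
  constructor
  · have h2 := key (fun i => 1 - c i)
      (fun i hi => by linarith [hc1 i hi])
      (fun i hi => by linarith [hc0 i hi])
    have h3 : ∑ i ∈ s, (1 - c i) * e i = ∑ i ∈ s, e i - ∑ i ∈ s, c i * e i := by
      rw [← Finset.sum_sub_distrib]
      exact Finset.sum_congr rfl fun i _ => by ring
    rw [h3, hsum] at h2
    linarith
  · exact key c hc0 hc1

private lemma mem_valid_iff (E : SRSE) (ω : E.Omega) :
    ω ∈ E.valid ↔ ω.1 ∈ E.validZ ∧ ω.2 ∈ E.validT ω.1 := by
  simp only [SRSE.valid, SRSE.validZ, SRSE.validT, Finset.mem_filter, Finset.mem_univ, true_and]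

private lemma mem_acceptedPairs_iff (E : SRSE) {J1 J2 : ℕ} (W : Fin E.N → Fin J1 → ℝ)
    (X : Fin E.N → Fin J2 → ℝ) (aS aT : ℝ) (ω : E.Omega) :
    ω ∈ E.acceptedPairs W X aS aT ↔ ω.1 ∈ E.acceptZ W aS ∧ ω.2 ∈ E.acceptT X aT ω.1 := by
  have hms : E.MS W ω = E.MSz W ω.1 := rfl
  simp only [SRSE.acceptedPairs, SRSE.acceptZ, SRSE.acceptT, Finset.mem_filter,
    mem_valid_iff, hms]
  tauto

/-- Regroup a sum over a set of pairs by the first coordinate. -/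
private lemma sum_pairs (E : SRSE) (s : Finset (Fin E.N → Bool))
    (F : (Fin E.N → Bool) → Finset (Fin E.N → Bool)) (T : Finset E.Omega)
    (hT : ∀ ω : E.Omega, ω ∈ T ↔ ω.1 ∈ s ∧ ω.2 ∈ F ω.1) (g : E.Omega → ℝ) :
    ∑ ω ∈ T, g ω = ∑ z ∈ s, ∑ t ∈ F z, g (z, t) := by
  classical
  rw [Finset.sum_sigma' s F (fun z t => g (z, t))]
  refine Finset.sum_nbij' (fun ω => ⟨ω.1, ω.2⟩) (fun x => (x.1, x.2)) ?_ ?_ ?_ ?_ ?_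
  · intro ω hω
    rcases (hT ω).mp hω with ⟨h1, h2⟩
    exact Finset.mem_sigma.mpr ⟨h1, h2⟩
  · intro x hx
    rcases Finset.mem_sigma.mp hx with ⟨h1, h2⟩
    exact (hT _).mpr ⟨h1, h2⟩
  · intro ω _; rfl
  · intro x _; rfl
  · intro ω _; rfl

private lemma validT_card (E : SRSE) {z : Fin E.N → Bool} (hz : z ∈ E.validZ) :
    (E.validT z).card = ∏ k, (E.nk k).choose (E.nk1 k) := by
  classical
  set Sz : Fin E.K → Finset (Fin E.N) := fun k => (E.stratum k).filter (fun i => z i = true)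
    with hSzdef
  have hScard : ∀ k, (Sz k).card = E.nk k := by
    intro k
    have := (Finset.mem_filter.mp hz).2
    simpa [SRSE.validZ, hSzdef] using this k
  have hstr : ∀ (k : Fin E.K) (i : Fin E.N), i ∈ E.stratum k ↔ E.st i = k := by
    intro k i; simp [SRSE.stratum]
  have hmem : ∀ t, t ∈ E.validT z ↔
      (∀ k, ((E.stratum k).filter fun i => z i = true ∧ t i = true).card = E.nk1 k) ∧
      (∀ i, t i = true → z i = true) := by
    intro t; simp [SRSE.validT]
  have key : (E.validT z).card
      = (Finset.univ.pi fun k => (Sz k).powersetCard (E.nk1 k)).card := by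
    refine Finset.card_bij' (fun t _ => fun k _ => (Sz k).filter (fun i => t i = true))
      (fun g _ => fun i => decide (i ∈ g (E.st i) (Finset.mem_univ _))) ?_ ?_ ?_ ?_
    · -- forward well-defined
      intro t ht
      rcases (hmem t).mp ht with ⟨h1, _h2⟩
      refine Finset.mem_pi.mpr fun k _ => Finset.mem_powersetCard.mpr
        ⟨Finset.filter_subset _ _, ?_⟩
      simp only [hSzdef, Finset.filter_filter]
      exact h1 k
    · -- backward well-defined
      intro g hg
      have hgk : ∀ k, g k (Finset.mem_univ k) ⊆ Sz k ∧
          (g k (Finset.mem_univ k)).card = E.nk1 k := fun k =>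
        Finset.mem_powersetCard.mp (Finset.mem_pi.mp hg k (Finset.mem_univ k))
      refine (hmem _).mpr ⟨?_, ?_⟩
      · intro k
        have hset : ((E.stratum k).filter fun i => z i = true ∧
            (decide (i ∈ g (E.st i) (Finset.mem_univ _)) = true)) = g k (Finset.mem_univ k) := by
          ext i
          simp only [Finset.mem_filter, decide_eq_true_eq]
          constructor
          · rintro ⟨hik, _, hig⟩
            have hk : E.st i = k := (hstr k i).mp hik
            rw [hk] at hig
            exact hig
          · intro hig
            have hiS : i ∈ Sz k := (hgk k).1 hig
            have hik : i ∈ E.stratum k := (Finset.mem_filter.mp hiS).1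
            have hzi : z i = true := (Finset.mem_filter.mp hiS).2
            have hk : E.st i = k := (hstr k i).mp hik
            refine ⟨hik, hzi, ?_⟩
            rw [hk]
            exact hig
        rw [hset]
        exact (hgk k).2
      · intro i hi
        simp only [decide_eq_true_eq] at hi
        have hiS : i ∈ Sz (E.st i) := (hgk (E.st i)).1 hi
        exact (Finset.mem_filter.mp hiS).2
    · -- left inverse
      intro t ht
      rcases (hmem t).mp ht with ⟨_h1, h2⟩
      funext i
      by_cases hti : t i = true
      · have hzi := h2 i hti
        have his : i ∈ E.stratum (E.st i) := (hstr _ i).mpr rfl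
        simp [hSzdef, Finset.mem_filter, his, hzi, hti]
      · have hti' : t i = false := by
          cases h : t i
          · rfl
          · exact absurd h hti
        simp [Finset.mem_filter, hti']
    · -- right inverse
      intro g hg
      funext k hk
      have hgk : g k (Finset.mem_univ k) ⊆ Sz k :=
        (Finset.mem_powersetCard.mp (Finset.mem_pi.mp hg k (Finset.mem_univ k))).1
      ext i
      simp only [Finset.mem_filter, decide_eq_true_eq]
      constructor
      · rintro ⟨hiS, hig⟩
        have hk' : E.st i = k := (hstr k i).mp (Finset.mem_filter.mp hiS).1
        rw [hk'] at hig
        exact hig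
      · intro hig
        have hiS : i ∈ Sz k := hgk hig
        have hk' : E.st i = k := (hstr k i).mp (Finset.mem_filter.mp hiS).1
        refine ⟨hiS, ?_⟩
        rw [hk']
        exact hig
  rw [key, Finset.card_pi]
  exact Finset.prod_congr rfl fun k _ => by rw [Finset.card_powersetCard, hScard]



/-- Theorem S3: the total variation distance between the single-stage
stratified rejective design (uniform over the jointly acceptable pairs `M`) and the
two-stage design is bounded by
`1(M = ∅) + 1(M ≠ ∅) · E|P(M_T ≤ a_T ∣ Z) - P(M_T ≤ a_T ∣ M_S ≤ a_S)| / P(M_T ≤ a_T, M_S ≤ a_S)`,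
with the expectation and probabilities computed under the unconditional SRSE design. -/
theorem statement17 (E : SurveyExperiments.SRSE) {J1 J2 : ℕ}
    (W : Fin E.N → Fin J1 → ℝ) (X : Fin E.N → Fin J2 → ℝ) (aS aT : ℝ)
    (haS : 0 < aS) (haT : 0 < aT)
    (hlo : ∀ k, 2 ≤ E.nk1 k) (hhi : ∀ k, E.nk1 k + 2 ≤ E.nk k)
    (hsub : ∀ k, E.nk k ≤ E.Nk k)
    (hwell : ∀ z ∈ E.acceptZ W aS, (E.acceptT X aT z).Nonempty) :
    SurveyExperiments.dTV (E.singleStage W X aS aT) (E.twoStage W X aS aT)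
      ≤ (if E.acceptedPairs W X aS aT = ∅ then (1 : ℝ) else 0) +
        (if E.acceptedPairs W X aS aT ≠ ∅ then
          (∫ ω, |E.condAcceptProb X aT ω.1 -
              (E.P (E.accept W X aS aT)).toReal /
                (E.P {ω' : E.Omega | E.MS W ω' ≤ aS}).toReal| ∂E.P) /
            (E.P (E.accept W X aS aT)).toReal
        else 0) := by
  classical
  by_cases hM : E.acceptedPairs W X aS aT = ∅
  · -- Case `M = ∅`: the single-stage design is the zero measure, and `dTV ≤ 1`.
    simp only [hM, ne_eq, not_true_eq_false, if_true, if_false, add_zero]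
    have h0 : E.singleStage W X aS aT = 0 := by
      simp [SRSE.singleStage, hM, unif]
    have hQ : ∀ A : Set E.Omega, E.twoStage W X aS aT A ≤ 1 := by
      intro A
      rw [SRSE.twoStage, Measure.smul_apply, Measure.finset_sum_apply, smul_eq_mul]
      calc ((E.acceptZ W aS).card : ℝ≥0∞)⁻¹ *
            ∑ z ∈ E.acceptZ W aS,
              ((((E.acceptT X aT z).card : ℝ≥0∞)⁻¹ •
                ∑ t ∈ E.acceptT X aT z, Measure.dirac (z, t)) A)
          ≤ ((E.acceptZ W aS).card : ℝ≥0∞)⁻¹ * ∑ _z ∈ E.acceptZ W aS, 1 := by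
            gcongr with z hz
            rw [Measure.smul_apply, smul_eq_mul, Measure.finset_sum_apply]
            calc ((E.acceptT X aT z).card : ℝ≥0∞)⁻¹ *
                  ∑ t ∈ E.acceptT X aT z, Measure.dirac (z, t) A
                ≤ ((E.acceptT X aT z).card : ℝ≥0∞)⁻¹ *
                  ∑ _t ∈ E.acceptT X aT z, 1 := by
                  gcongr with t ht
                  exact prob_le_one
              _ ≤ 1 := by
                  simp only [Finset.sum_const, nsmul_eq_mul, mul_one]
                  exact ENNReal.inv_mul_le_one _
        _ ≤ 1 := by
            simp only [Finset.sum_const, nsmul_eq_mul, mul_one]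
            exact ENNReal.inv_mul_le_one _
    rw [SurveyExperiments.dTV]
    refine ciSup_le fun A => ?_
    rw [h0]
    simp only [Measure.coe_zero, Pi.zero_apply, ENNReal.toReal_zero, zero_sub, abs_neg]
    rw [abs_of_nonneg ENNReal.toReal_nonneg]
    have h1 := ENNReal.toReal_mono ENNReal.one_ne_top (hQ A)
    simpa using h1
  · -- Case `M ≠ ∅`.
    have hMne : (E.acceptedPairs W X aS aT).Nonempty := Finset.nonempty_iff_ne_empty.mpr hM
    rw [if_neg hM, if_pos hM, zero_add]
    set cE : ℝ := (E.P (E.accept W X aS aT)).toReal /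
        (E.P {ω' : E.Omega | E.MS W ω' ≤ aS}).toReal with hcE
    -- basic positivity facts
    have hAZne : (E.acceptZ W aS).Nonempty := by
      obtain ⟨ω, hω⟩ := hMne
      exact ⟨ω.1, ((mem_acceptedPairs_iff E W X aS aT ω).mp hω).1⟩
    have hVne : E.valid.Nonempty := by
      obtain ⟨ω, hω⟩ := hMne
      exact ⟨ω, Finset.filter_subset _ _ hω⟩
    have hMpos : (0 : ℝ) < ((E.acceptedPairs W X aS aT).card : ℝ) := by
      exact_mod_cast hMne.card_pos
    have hAZpos : (0 : ℝ) < ((E.acceptZ W aS).card : ℝ) := by exact_mod_cast hAZne.card_pos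
    have hVpos : (0 : ℝ) < ((E.valid.card : ℕ) : ℝ) := by exact_mod_cast hVne.card_pos
    have hAZsub : E.acceptZ W aS ⊆ E.validZ := Finset.filter_subset _ _
    have hnz : ∀ z ∈ E.validZ, ((E.validT z).card : ℝ)
        = ((∏ k, (E.nk k).choose (E.nk1 k) : ℕ) : ℝ) := by
      intro z hz
      exact_mod_cast validT_card E hz
    have hm1 : ∀ z ∈ E.acceptZ W aS, (1 : ℝ) ≤ ((E.acceptT X aT z).card : ℝ) := by
      intro z hz
      exact_mod_cast (hwell z hz).card_pos
    have hmn : ∀ z, ((E.acceptT X aT z).card : ℝ) ≤ ((E.validT z).card : ℝ) := by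
      intro z
      exact_mod_cast Finset.card_le_card (Finset.filter_subset _ _)
    have hnbpos : (0 : ℝ) < ((∏ k, (E.nk k).choose (E.nk1 k) : ℕ) : ℝ) := by
      obtain ⟨z, hz⟩ := hAZne
      calc (0 : ℝ) < 1 := one_pos
        _ ≤ ((E.acceptT X aT z).card : ℝ) := hm1 z hz
        _ ≤ ((E.validT z).card : ℝ) := hmn z
        _ = _ := hnz z (hAZsub hz)
    -- the count of `M` splits along first coordinates
    have hMcsum : ((E.acceptedPairs W X aS aT).card : ℝ)
        = ∑ z ∈ E.acceptZ W aS, ((E.acceptT X aT z).card : ℝ) := by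
      have h := sum_pairs E (E.acceptZ W aS) (E.acceptT X aT) (E.acceptedPairs W X aS aT)
        (fun ω => mem_acceptedPairs_iff E W X aS aT ω) (fun _ => (1 : ℝ))
      simpa [Finset.sum_const, nsmul_eq_mul] using h
    -- probability of joint acceptance
    have hfe : E.valid.filter (· ∈ E.accept W X aS aT) = E.acceptedPairs W X aS aT := by
      rw [SRSE.acceptedPairs]
      exact Finset.filter_congr fun ω _ => by simp [SRSE.accept]
    have hPacc : (E.P (E.accept W X aS aT)).toReal
        = ((E.acceptedPairs W X aS aT).card : ℝ) / ((E.valid.card : ℕ) : ℝ) := by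
      rw [SRSE.P, unif_apply, hfe, ENNReal.toReal_mul, ENNReal.toReal_inv,
        ENNReal.toReal_natCast, ENNReal.toReal_natCast, inv_mul_eq_div]
    -- probability of sampling acceptance
    have hfilt : ((E.valid.filter (· ∈ {ω' : E.Omega | E.MS W ω' ≤ aS})).card : ℝ)
        = ((E.acceptZ W aS).card : ℝ) * ((∏ k, (E.nk k).choose (E.nk1 k) : ℕ) : ℝ) := by
      have hT : ∀ ω : E.Omega, ω ∈ E.valid.filter (· ∈ {ω' : E.Omega | E.MS W ω' ≤ aS}) ↔
          ω.1 ∈ E.validZ ∧ ω.2 ∈ (E.validT ω.1).filter (fun _ => E.MSz W ω.1 ≤ aS) := by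
        intro ω
        have hms : E.MS W ω = E.MSz W ω.1 := rfl
        simp only [Finset.mem_filter, mem_valid_iff, Set.mem_setOf_eq, hms]
        tauto
      have h := sum_pairs E E.validZ (fun z => (E.validT z).filter (fun _ => E.MSz W z ≤ aS))
        _ hT (fun _ => (1 : ℝ))
      simp only [Finset.sum_const, nsmul_eq_mul, mul_one] at h
      rw [h]
      have h2 : ∀ z ∈ E.validZ,
          (((E.validT z).filter (fun _ => E.MSz W z ≤ aS)).card : ℝ)
          = if E.MSz W z ≤ aS then ((E.validT z).card : ℝ) else 0 := by
        intro z _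
        by_cases hc : E.MSz W z ≤ aS
        · simp [hc]
        · simp [hc]
      rw [Finset.sum_congr rfl h2, ← Finset.sum_filter]
      have hAZ' : E.validZ.filter (fun z => E.MSz W z ≤ aS) = E.acceptZ W aS := by
        rw [SRSE.acceptZ]
      rw [hAZ', Finset.sum_congr rfl (fun z hz => hnz z (hAZsub hz)), Finset.sum_const,
        nsmul_eq_mul]
    have hPms : (E.P {ω' : E.Omega | E.MS W ω' ≤ aS}).toReal
        = ((E.acceptZ W aS).card : ℝ) * ((∏ k, (E.nk k).choose (E.nk1 k) : ℕ) : ℝ) /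
          ((E.valid.card : ℕ) : ℝ) := by
      rw [SRSE.P, unif_apply, ENNReal.toReal_mul, ENNReal.toReal_inv,
        ENNReal.toReal_natCast, ENNReal.toReal_natCast, inv_mul_eq_div, hfilt]
    -- value of the constant `cE`
    have hcval : cE = ((E.acceptedPairs W X aS aT).card : ℝ) /
        (((E.acceptZ W aS).card : ℝ) * ((∏ k, (E.nk k).choose (E.nk1 k) : ℕ) : ℝ)) := by
      rw [hcE, hPacc, hPms]
      rw [div_div_div_cancel_right₀]
      exact ne_of_gt hVpos
    -- the integral of the statement as a finite sum
    have hInt : (∫ ω, |E.condAcceptProb X aT ω.1 - cE| ∂E.P)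
        = ((E.valid.card : ℕ) : ℝ)⁻¹ * ∑ z ∈ E.validZ, ((E.validT z).card : ℝ) *
            |E.condAcceptProb X aT z - cE| := by
      rw [SRSE.P, integral_unif]
      congr 1
      rw [sum_pairs E E.validZ E.validT E.valid (mem_valid_iff E)
        (fun ω => |E.condAcceptProb X aT ω.1 - cE|)]
      refine Finset.sum_congr rfl fun z _ => ?_
      have hb : ∑ t ∈ E.validT z, |E.condAcceptProb X aT (z, t).1 - cE|
          = ∑ _t ∈ E.validT z, |E.condAcceptProb X aT z - cE| := rfl
      rw [hb, Finset.sum_const, nsmul_eq_mul]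
    -- evaluation of the two designs on an arbitrary event
    have hPA : ∀ A : Set E.Omega, ((E.singleStage W X aS aT) A).toReal
        = ((E.acceptedPairs W X aS aT).card : ℝ)⁻¹ *
          ∑ z ∈ E.acceptZ W aS,
            (((E.acceptT X aT z).filter fun t => (z, t) ∈ A).card : ℝ) := by
      intro A
      rw [SRSE.singleStage, unif_apply, ENNReal.toReal_mul, ENNReal.toReal_inv,
        ENNReal.toReal_natCast, ENNReal.toReal_natCast]
      congr 1
      have hT : ∀ ω : E.Omega, ω ∈ (E.acceptedPairs W X aS aT).filter (· ∈ A) ↔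
          ω.1 ∈ E.acceptZ W aS ∧
            ω.2 ∈ ((E.acceptT X aT ω.1).filter fun t => (ω.1, t) ∈ A) := by
        intro ω
        simp only [Finset.mem_filter, mem_acceptedPairs_iff, Prod.mk.eta]
        tauto
      have h := sum_pairs E (E.acceptZ W aS)
        (fun z => (E.acceptT X aT z).filter fun t => (z, t) ∈ A) _ hT (fun _ => (1 : ℝ))
      simpa [Finset.sum_const, nsmul_eq_mul] using h
    have hQA : ∀ A : Set E.Omega, ((E.twoStage W X aS aT) A).toReal
        = (((E.acceptZ W aS).card : ℝ))⁻¹ *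
          ∑ z ∈ E.acceptZ W aS, (((E.acceptT X aT z).card : ℝ))⁻¹ *
            (((E.acceptT X aT z).filter fun t => (z, t) ∈ A).card : ℝ) := by
      intro A
      rw [SRSE.twoStage, Measure.smul_apply, Measure.finset_sum_apply, smul_eq_mul]
      have hterm : ∀ z ∈ E.acceptZ W aS,
          ((((E.acceptT X aT z).card : ℝ≥0∞)⁻¹ •
            ∑ t ∈ E.acceptT X aT z, Measure.dirac (z, t)) A)
          = ((E.acceptT X aT z).card : ℝ≥0∞)⁻¹ *
            ((((E.acceptT X aT z).filter fun t => (z, t) ∈ A).card : ℕ) : ℝ≥0∞) := by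
        intro z _
        rw [Measure.smul_apply, smul_eq_mul, Measure.finset_sum_apply]
        congr 1
        rw [Finset.card_filter, Nat.cast_sum]
        refine Finset.sum_congr rfl fun t _ => ?_
        rw [Measure.dirac_apply' _ (measAll A)]
        by_cases h : (z, t) ∈ A <;> simp [h]
      rw [Finset.sum_congr rfl hterm]
      have hfin : ∀ z ∈ E.acceptZ W aS,
          ((E.acceptT X aT z).card : ℝ≥0∞)⁻¹ *
            ((((E.acceptT X aT z).filter fun t => (z, t) ∈ A).card : ℕ) : ℝ≥0∞) ≠ ⊤ := by
        intro z hz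
        have hz0 : ((E.acceptT X aT z).card : ℝ≥0∞) ≠ 0 := by
          exact_mod_cast (hwell z hz).card_pos.ne'
        exact ENNReal.mul_ne_top (ENNReal.inv_ne_top.mpr hz0) (ENNReal.natCast_ne_top _)
      rw [ENNReal.toReal_mul, ENNReal.toReal_inv, ENNReal.toReal_natCast,
        ENNReal.toReal_sum hfin]
      congr 1
      refine Finset.sum_congr rfl fun z hz => ?_
      rw [ENNReal.toReal_mul, ENNReal.toReal_inv, ENNReal.toReal_natCast, ENNReal.toReal_natCast]
    -- the per-event total-variation bound
    have hbound : ∀ A : Set E.Omega,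
        |((E.singleStage W X aS aT) A).toReal - ((E.twoStage W X aS aT) A).toReal|
          ≤ (∑ z ∈ E.acceptZ W aS,
              |((E.acceptT X aT z).card : ℝ) / ((E.acceptedPairs W X aS aT).card : ℝ) -
                (((E.acceptZ W aS).card : ℝ))⁻¹|) / 2 := by
      intro A
      rw [hPA A, hQA A]
      have hrw : ((E.acceptedPairs W X aS aT).card : ℝ)⁻¹ *
            (∑ z ∈ E.acceptZ W aS,
              (((E.acceptT X aT z).filter fun t => (z, t) ∈ A).card : ℝ)) -
          (((E.acceptZ W aS).card : ℝ))⁻¹ *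
            (∑ z ∈ E.acceptZ W aS, (((E.acceptT X aT z).card : ℝ))⁻¹ *
              (((E.acceptT X aT z).filter fun t => (z, t) ∈ A).card : ℝ))
          = ∑ z ∈ E.acceptZ W aS,
              ((((E.acceptT X aT z).filter fun t => (z, t) ∈ A).card : ℝ) /
                ((E.acceptT X aT z).card : ℝ)) *
              (((E.acceptT X aT z).card : ℝ) / ((E.acceptedPairs W X aS aT).card : ℝ) -
                (((E.acceptZ W aS).card : ℝ))⁻¹) := by
        rw [Finset.mul_sum, Finset.mul_sum, ← Finset.sum_sub_distrib]
        refine Finset.sum_congr rfl fun z hz => ?_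
        have hmz : ((E.acceptT X aT z).card : ℝ) ≠ 0 := by
          have := hm1 z hz; linarith
        field_simp
      rw [hrw]
      refine abs_sum_le_half _ _ _ ?_ ?_ ?_
      · intro z hz
        have := hm1 z hz
        positivity
      · intro z hz
        rw [div_le_one (by linarith [hm1 z hz])]
        exact_mod_cast Finset.card_le_card (Finset.filter_subset _ _)
      · rw [Finset.sum_sub_distrib, ← Finset.sum_div, ← hMcsum,
          div_self (ne_of_gt hMpos), Finset.sum_const, nsmul_eq_mul,
          mul_inv_cancel₀ (ne_of_gt hAZpos), sub_self]
    -- comparison of the sum bound with the RHS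
    have hS0 : (0 : ℝ) ≤ ∑ z ∈ E.acceptZ W aS,
        |((E.acceptT X aT z).card : ℝ) / ((E.acceptedPairs W X aS aT).card : ℝ) -
          (((E.acceptZ W aS).card : ℝ))⁻¹| :=
      Finset.sum_nonneg fun z _ => abs_nonneg _
    have hfinal : (∑ z ∈ E.acceptZ W aS,
        |((E.acceptT X aT z).card : ℝ) / ((E.acceptedPairs W X aS aT).card : ℝ) -
          (((E.acceptZ W aS).card : ℝ))⁻¹|) / 2
        ≤ (∫ ω, |E.condAcceptProb X aT ω.1 - cE| ∂E.P) /
            (E.P (E.accept W X aS aT)).toReal := by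
      rw [hInt, hPacc]
      have hMne0 : ((E.acceptedPairs W X aS aT).card : ℝ) ≠ 0 := ne_of_gt hMpos
      have hVne0 : ((E.valid.card : ℕ) : ℝ) ≠ 0 := ne_of_gt hVpos
      have hx : ((E.valid.card : ℕ) : ℝ)⁻¹ * (∑ z ∈ E.validZ, ((E.validT z).card : ℝ) *
            |E.condAcceptProb X aT z - cE|) /
          (((E.acceptedPairs W X aS aT).card : ℝ) / ((E.valid.card : ℕ) : ℝ))
          = (∑ z ∈ E.validZ, ((E.validT z).card : ℝ) *
              |E.condAcceptProb X aT z - cE|) / ((E.acceptedPairs W X aS aT).card : ℝ) := by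
        rw [div_div_eq_mul_div, mul_right_comm, inv_mul_cancel₀ hVne0, one_mul]
      rw [hx]
      -- pointwise identity on acceptable samplings
      have hpt : ∀ z ∈ E.acceptZ W aS, ((E.validT z).card : ℝ) *
            |E.condAcceptProb X aT z - cE|
          = ((E.acceptedPairs W X aS aT).card : ℝ) *
            |((E.acceptT X aT z).card : ℝ) / ((E.acceptedPairs W X aS aT).card : ℝ) -
              (((E.acceptZ W aS).card : ℝ))⁻¹| := by
        intro z hz
        have e1 : ∀ a x : ℝ, 0 ≤ a → a * |x| = |a * x| := fun a x ha => by
          rw [abs_mul, abs_of_nonneg ha]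
        rw [hnz z (hAZsub hz), e1 _ _ (le_of_lt hnbpos), e1 _ _ (le_of_lt hMpos)]
        congr 1
        rw [SRSE.condAcceptProb, hnz z (hAZsub hz), hcval]
        have hnb0 : ((∏ k, (E.nk k).choose (E.nk1 k) : ℕ) : ℝ) ≠ 0 := ne_of_gt hnbpos
        have hnb0' : (∏ k, ((E.nk k).choose (E.nk1 k) : ℝ)) ≠ 0 := by
          push_cast at hnb0; exact hnb0
        have hAZ0 : (((E.acceptZ W aS).card : ℝ)) ≠ 0 := ne_of_gt hAZpos
        have hM0 : ((E.acceptedPairs W X aS aT).card : ℝ) ≠ 0 := ne_of_gt hMpos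
        field_simp
      calc (∑ z ∈ E.acceptZ W aS,
          |((E.acceptT X aT z).card : ℝ) / ((E.acceptedPairs W X aS aT).card : ℝ) -
            (((E.acceptZ W aS).card : ℝ))⁻¹|) / 2
          ≤ ∑ z ∈ E.acceptZ W aS,
            |((E.acceptT X aT z).card : ℝ) / ((E.acceptedPairs W X aS aT).card : ℝ) -
              (((E.acceptZ W aS).card : ℝ))⁻¹| := by linarith
        _ = (∑ z ∈ E.acceptZ W aS, ((E.acceptedPairs W X aS aT).card : ℝ) *
            |((E.acceptT X aT z).card : ℝ) / ((E.acceptedPairs W X aS aT).card : ℝ) -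
              (((E.acceptZ W aS).card : ℝ))⁻¹|) / ((E.acceptedPairs W X aS aT).card : ℝ) := by
            rw [← Finset.mul_sum, mul_comm, mul_div_assoc, div_self (ne_of_gt hMpos), mul_one]
        _ = (∑ z ∈ E.acceptZ W aS, ((E.validT z).card : ℝ) *
            |E.condAcceptProb X aT z - cE|) / ((E.acceptedPairs W X aS aT).card : ℝ) := by
            rw [Finset.sum_congr rfl hpt]
        _ ≤ (∑ z ∈ E.validZ, ((E.validT z).card : ℝ) *
            |E.condAcceptProb X aT z - cE|) / ((E.acceptedPairs W X aS aT).card : ℝ) := by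
            refine (div_le_div_iff_of_pos_right hMpos).mpr ?_
            refine Finset.sum_le_sum_of_subset_of_nonneg hAZsub ?_
            exact fun z _ _ => mul_nonneg (Nat.cast_nonneg _) (abs_nonneg _)
    refine le_trans ?_ hfinal
    rw [SurveyExperiments.dTV]
    exact ciSup_le hbound
end SurveyExperiments
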